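/- For all positive integers $j$ and $k$: (i) every finite simple graph $G$ with $\dim_j(G) = k$ has at most $(\lfloor \tfrac{2(j+1)}{3}\rfloor +1)^{k}+k \sum_{i = 1}^{\lceil (j+1)/3\rceil } (2i-1)^{k-1}$ vertices; and (ii) there exists a finite simple graph $G$ with $\dim_j(G) = k$ and exactly $(\lfloor \tfrac{2(j+1)}{3}\rfloor +1)^{k}+k \sum_{i = 1}^{\lceil (j+1)/3\rceil } (2i-1)^{k-1}$ vertices. -/

import Mathlib

open SimpleGraph

/-- The distance-`k` truncated distance `dₖ(x,y) = min{d(x,y), k+1}`, valued in `ℕ∞`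
(so unreachable pairs have distance `⊤`, which is truncated to `k+1`). -/
noncomputable def distK {V : Type*} (G : SimpleGraph V) (k : ℕ) (x y : V) : ℕ∞ :=
  min (G.edist x y) (k + 1)

/-- `S` is a distance-`k` resolving set of `G`. -/
def IsDistKResolving {V : Type*} (G : SimpleGraph V) (k : ℕ) (S : Set V) : Prop :=
  ∀ x y : V, x ≠ y → ∃ z ∈ S, distK G k x z ≠ distK G k y z

/-- The distance-`k` dimension of a finite graph `G`: the minimum cardinality of a
distance-`k` resolving set of `G`. -/
noncomputable def dimK {V : Type*} [Fintype V] (G : SimpleGraph V) (k : ℕ) : ℕ :=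
  sInf { m | ∃ S : Finset V, IsDistKResolving G k ↑S ∧ S.card = m }

/-- The maximum possible order of a graph `G` with `dim_j(G) = k` is
`(⌊2(j+1)/3⌋+1)^k + k * ∑_{i=1}^{⌈(j+1)/3⌉} (2i-1)^(k-1)`. -/
lemma univ_resolving {V : Type*} [Fintype V] (G : SimpleGraph V) (j : ℕ) :
    IsDistKResolving G j ↑(Finset.univ : Finset V) := by
  intro x y hxy
  refine ⟨x, by simp, ?_⟩
  have h1 : distK G j x x = 0 := by
    simp [distK, SimpleGraph.edist_self]
  have h2 : distK G j y x ≠ 0 := by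
    have hp : (0:ℕ∞) < G.edist y x := SimpleGraph.edist_pos_of_ne (Ne.symm hxy)
    have h3 : (0:ℕ∞) < (j:ℕ∞) + 1 := lt_of_lt_of_le zero_lt_one le_add_self
    exact (lt_min hp h3).ne'
  rw [h1]; exact fun h => h2 h.symm

lemma dim_set_nonempty {V : Type*} [Fintype V] (G : SimpleGraph V) (j : ℕ) :
    { m | ∃ S : Finset V, IsDistKResolving G j ↑S ∧ S.card = m }.Nonempty :=
  ⟨(Finset.univ : Finset V).card, Finset.univ, univ_resolving G j, rfl⟩

lemma exists_resolving_of_dimK {V : Type*} [Fintype V] (G : SimpleGraph V) (j : ℕ) :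
    ∃ S : Finset V, IsDistKResolving G j ↑S ∧ S.card = dimK G j :=
  Nat.sInf_mem (dim_set_nonempty G j)

lemma sum_odd_reindex (c e : ℕ) :
    ∑ i ∈ Finset.Icc 1 c, (2 * i - 1) ^ e = ∑ t ∈ Finset.range c, (2 * t + 1) ^ e := by
  refine Finset.sum_nbij' (fun i => i - 1) (fun t => t + 1) ?_ ?_ ?_ ?_ ?_
  · intro a ha; simp only [Finset.mem_Icc] at ha; simp only [Finset.mem_range]; omega
  · intro a ha; simp only [Finset.mem_range] at ha; simp only [Finset.mem_Icc]; omega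
  · intro a ha; simp only [Finset.mem_Icc] at ha; show a - 1 + 1 = a; omega
  · intro a ha; show a + 1 - 1 = a; omega
  · intro a ha; simp only [Finset.mem_Icc] at ha
    show (2 * a - 1) ^ e = (2 * (a - 1) + 1) ^ e
    congr 1; omega

lemma card_le_bound {V : Type*} [Fintype V] (G : SimpleGraph V) (j : ℕ) (S : Finset V)
    (hS : IsDistKResolving G j ↑S) :
    Fintype.card V ≤ ((2 * (j + 1)) / 3 + 1) ^ S.card
      + S.card * ∑ i ∈ Finset.Icc 1 ((j + 3) / 3), (2 * i - 1) ^ (S.card - 1) := by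
  classical
  set M := j + 1 with hM
  set c := (j + 3) / 3 with hc
  have hcM : c ≤ M := by omega
  have hM' : (M:ℕ∞) = (j:ℕ∞) + 1 := by rw [hM]; push_cast; ring
  have hfin' : ∀ a : ℕ∞, min a (M:ℕ∞) ≠ ⊤ :=
    fun a => ne_top_of_le_ne_top (ENat.coe_ne_top M) (min_le_right _ _)
  -- the code map
  set F : V → (↑S → ℕ) := fun x s => (min (G.edist x ↑s) (M:ℕ∞)).toNat with hF
  have hFle : ∀ (x : V) (s : ↑S), F x s ≤ M := by
    intro x s
    exact ENat.toNat_le_of_le_coe (min_le_right _ _)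
  have hFdistK : ∀ (x : V) (s : ↑S), (F x s : ℕ∞) = distK G j x ↑s := by
    intro x s
    rw [hF]
    simp only []
    rw [ENat.coe_toNat (hfin' _)]
    unfold distK
    rw [hM']
  -- F is injective
  have hFinj : Function.Injective F := by
    intro x y hxy
    by_contra hne
    obtain ⟨z, hz, hdz⟩ := hS x y hne
    apply hdz
    have : F x ⟨z, hz⟩ = F y ⟨z, hz⟩ := by rw [hxy]
    rw [← hFdistK x ⟨z, hz⟩, ← hFdistK y ⟨z, hz⟩, this]
  -- target finsets
  set FarS : Finset (↑S → ℕ) := Fintype.piFinset fun _ => Finset.Icc c M with hFarS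
  set lo : ↑S → ↑S → ℕ → ℕ := fun s s' t => (min (G.edist ↑s ↑s' - t) (M:ℕ∞)).toNat with hlo
  set hi : ↑S → ↑S → ℕ → ℕ := fun s s' t => (min (G.edist ↑s ↑s' + t) (M:ℕ∞)).toNat with hhi
  set NearS : ↑S → ℕ → Finset (↑S → ℕ) := fun s t =>
    Fintype.piFinset fun s' => if s' = s then {t} else Finset.Icc (lo s s' t) (hi s s' t)
    with hNearS
  set Total : Finset (↑S → ℕ) :=
    FarS ∪ (Finset.univ ×ˢ Finset.range c).biUnion (fun p => NearS p.1 p.2) with hTotal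
  -- F maps into Total
  have hmaps : ∀ x : V, F x ∈ Total := by
    intro x
    by_cases hfar : ∀ s : ↑S, c ≤ F x s
    · apply Finset.mem_union_left
      rw [hFarS, Fintype.mem_piFinset]
      intro s
      exact Finset.mem_Icc.mpr ⟨hfar s, hFle x s⟩
    · push_neg at hfar
      obtain ⟨s, hs⟩ := hfar
      set t := F x s with ht
      have htc : t < c := hs
      have hxs : G.edist x ↑s = (t : ℕ∞) := by
        have h1 : min (G.edist x ↑s) (M:ℕ∞) = (t:ℕ∞) := (ENat.coe_toNat (hfin' _)).symm
        rcases min_cases (G.edist x ↑s) (M:ℕ∞) with ⟨h2, h3⟩ | ⟨h2, h3⟩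
        · rw [← h1, h2]
        · exfalso
          rw [h2] at h1
          have : t = M := by exact_mod_cast h1.symm
          omega
      apply Finset.mem_union_right
      apply Finset.mem_biUnion.mpr
      refine ⟨(s, t), by simp [Finset.mem_range, htc], ?_⟩
      rw [hNearS, Fintype.mem_piFinset]
      intro s'
      simp only []
      by_cases hss' : s' = s
      · subst hss'
        simp [← ht]
      · rw [if_neg hss']
        refine Finset.mem_Icc.mpr ⟨?_, ?_⟩
        · -- lo ≤ F x s'
          apply ENat.toNat_le_toNat _ (hfin' _)
          apply min_le_min _ (le_refl _)
          rw [tsub_le_iff_right]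
          calc G.edist ↑s ↑s' ≤ G.edist ↑s x + G.edist x ↑s' := SimpleGraph.edist_triangle
            _ = G.edist x ↑s' + (t:ℕ∞) := by rw [SimpleGraph.edist_comm, hxs]; ring
        · -- F x s' ≤ hi
          apply ENat.toNat_le_toNat _ (hfin' _)
          apply min_le_min _ (le_refl _)
          calc G.edist x ↑s' ≤ G.edist x ↑s + G.edist ↑s ↑s' := SimpleGraph.edist_triangle
            _ = G.edist ↑s ↑s' + (t:ℕ∞) := by rw [hxs]; ring
  -- cardinality of Total
  have hcard : Fintype.card V ≤ Total.card := by
    rw [← Finset.card_univ]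
    apply Finset.card_le_card_of_injOn F (fun x _ => hmaps x) (hFinj.injOn)
  refine hcard.trans ?_
  have hfarcard : FarS.card = ((2 * (j + 1)) / 3 + 1) ^ S.card := by
    rw [hFarS, Fintype.card_piFinset, Finset.prod_const, Nat.card_Icc]
    congr 1
    · omega
    · rw [Finset.card_univ, Fintype.card_coe]
  have hnearcard : ∀ (s : ↑S) (t : ℕ), t < c → (NearS s t).card ≤ (2 * t + 1) ^ (S.card - 1) := by
    intro s t htc
    rw [hNearS, Fintype.card_piFinset]
    have hstep : ∀ s' : ↑S,
        ((if s' = s then {t} else Finset.Icc (lo s s' t) (hi s s' t)) : Finset ℕ).card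
          ≤ if s' = s then 1 else 2 * t + 1 := by
      intro s'
      by_cases hss' : s' = s
      · simp [hss']
      · rw [if_neg hss', if_neg hss', Nat.card_Icc]
        -- hi ≤ lo + 2t
        have h1 : min (G.edist ↑s ↑s' + t) (M:ℕ∞) ≤ min (G.edist ↑s ↑s' - t) (M:ℕ∞) + 2 * t := by
          have ha : G.edist ↑s ↑s' + (t:ℕ∞) ≤ (G.edist ↑s ↑s' - t) + 2 * t := by
            calc G.edist ↑s ↑s' + (t:ℕ∞) ≤ (G.edist ↑s ↑s' - t + t) + t := by
                  gcongr
                  exact le_tsub_add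
              _ = G.edist ↑s ↑s' - t + 2 * t := by ring
          calc min (G.edist ↑s ↑s' + t) (M:ℕ∞)
              ≤ min ((G.edist ↑s ↑s' - t) + 2 * t) ((M:ℕ∞) + 2 * t) :=
                min_le_min ha le_self_add
            _ = min (G.edist ↑s ↑s' - t) (M:ℕ∞) + 2 * t := min_add_add_right _ _ _
        have e1 : ((hi s s' t : ℕ) : ℕ∞) = min (G.edist ↑s ↑s' + t) (M:ℕ∞) := by
          rw [hhi]; exact ENat.coe_toNat (hfin' _)
        have e2 : ((lo s s' t : ℕ) : ℕ∞) = min (G.edist ↑s ↑s' - t) (M:ℕ∞) := by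
          rw [hlo]; exact ENat.coe_toNat (hfin' _)
        have key : hi s s' t ≤ lo s s' t + 2 * t := by
          have h2 : ((hi s s' t : ℕ) : ℕ∞) ≤ ((lo s s' t : ℕ) : ℕ∞) + ((2 * t : ℕ) : ℕ∞) := by
            rw [e1, e2]
            have hcst : ((2 * t : ℕ) : ℕ∞) = 2 * (t:ℕ∞) := by push_cast; ring
            rw [hcst]
            exact h1
          exact_mod_cast h2
        omega
    calc ∏ s' : ↑S, ((if s' = s then {t} else Finset.Icc (lo s s' t) (hi s s' t)) : Finset ℕ).card
        ≤ ∏ s' : ↑S, (if s' = s then 1 else 2 * t + 1) := Finset.prod_le_prod' fun i _ => hstep i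
      _ = (2 * t + 1) ^ (S.card - 1) := by
          rw [← Finset.mul_prod_erase Finset.univ _ (Finset.mem_univ s)]
          rw [if_pos rfl, one_mul]
          rw [Finset.prod_congr rfl (fun x hx => if_neg (Finset.ne_of_mem_erase hx))]
          rw [Finset.prod_const]
          congr 1
          rw [Finset.card_erase_of_mem (Finset.mem_univ s)]
          rw [Finset.card_univ, Fintype.card_coe]
  calc Total.card ≤ FarS.card + ∑ p ∈ Finset.univ ×ˢ Finset.range c, (NearS p.1 p.2).card := by
        rw [hTotal]
        exact (Finset.card_union_le _ _).trans (by gcongr; exact Finset.card_biUnion_le)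
    _ ≤ ((2 * (j + 1)) / 3 + 1) ^ S.card
        + ∑ p ∈ Finset.univ ×ˢ Finset.range c, (2 * p.2 + 1) ^ (S.card - 1) := by
        rw [hfarcard]
        gcongr with p hp
        simp only [Finset.mem_product, Finset.mem_range] at hp
        exact hnearcard p.1 p.2 hp.2
    _ = ((2 * (j + 1)) / 3 + 1) ^ S.card
        + S.card * ∑ i ∈ Finset.Icc 1 ((j + 3) / 3), (2 * i - 1) ^ (S.card - 1) := by
        congr 1
        rw [Finset.sum_product]
        rw [Finset.sum_const_nat (m := ∑ t ∈ Finset.range c, (2 * t + 1) ^ (S.card - 1))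
          (fun s _ => rfl)]
        rw [sum_odd_reindex]
        rw [Finset.card_univ, Fintype.card_coe]

namespace Extremal

/-- `c = ⌈(j+1)/3⌉`. -/
def cc (j : ℕ) : ℕ := (j + 3) / 3

/-- pairwise distance of landmarks. -/
def dd0 (j : ℕ) : ℕ := max (2 * cc j - 1) (j + 1 - cc j)

def far (j k : ℕ) : Finset (Fin k → ℕ) :=
  Fintype.piFinset fun _ => Finset.Icc (cc j) (j + 1)

def near (j k : ℕ) (i : Fin k) (t : ℕ) : Finset (Fin k → ℕ) :=
  Fintype.piFinset fun l => if l = i then {t} else Finset.Icc (dd0 j - t) (dd0 j + t)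

def TT (j k : ℕ) : Finset (Fin k → ℕ) :=
  far j k ∪ (Finset.univ ×ˢ Finset.range (cc j)).biUnion fun p => near j k p.1 p.2

def cond (j k : ℕ) (v : Fin k → ℕ) : Prop :=
  (∀ l, v l ≤ j + 1) ∧ ∀ i l : Fin k, i ≠ l → dd0 j ≤ v l + v i ∧ v l ≤ dd0 j + v i

lemma cc_pos (j : ℕ) : 1 ≤ cc j := by unfold cc; omega

lemma dd0_lb (j : ℕ) : 2 * cc j - 1 ≤ dd0 j := le_max_left _ _

lemma dd0_lb' (j : ℕ) : j + 1 - cc j ≤ dd0 j := le_max_right _ _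

lemma dd0_ub (j : ℕ) : dd0 j ≤ j + 1 - cc j + 1 := by
  unfold dd0 cc; omega

lemma dd0_ub2 (j : ℕ) : dd0 j ≤ 2 * cc j := by
  unfold dd0 cc; omega

lemma dd0_le (j : ℕ) : dd0 j ≤ j + 1 := by
  have := dd0_ub j; have := cc_pos j; omega

lemma dd0_pos (j : ℕ) : 1 ≤ dd0 j := by
  have := dd0_lb j; have := cc_pos j; omega

lemma mem_TT {j k : ℕ} {v : Fin k → ℕ} : v ∈ TT j k ↔ cond j k v := by
  have hc1 := cc_pos j
  have hlb := dd0_lb j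
  have hlb' := dd0_lb' j
  have hub := dd0_ub j
  have hub2 := dd0_ub2 j
  constructor
  · intro hv
    rcases Finset.mem_union.mp hv with hfar | hnear
    · rw [far, Fintype.mem_piFinset] at hfar
      have hfar' : ∀ l, cc j ≤ v l ∧ v l ≤ j + 1 :=
        fun l => Finset.mem_Icc.mp (hfar l)
      refine ⟨fun l => (hfar' l).2, fun i l hil => ?_⟩
      have h1 := hfar' l
      have h2 := hfar' i
      omega
    · obtain ⟨p, hp, hmem⟩ := Finset.mem_biUnion.mp hnear
      obtain ⟨i, t⟩ := p
      simp only [Finset.mem_product, Finset.mem_range] at hp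
      rw [near, Fintype.mem_piFinset] at hmem
      have hvi : v i = t := by
        have := hmem i
        rw [if_pos rfl] at this
        exact Finset.mem_singleton.mp this
      have hvl : ∀ l, l ≠ i → dd0 j - t ≤ v l ∧ v l ≤ dd0 j + t := by
        intro l hl
        have := hmem l
        rw [if_neg hl] at this
        exact Finset.mem_Icc.mp this
      have ht : t < cc j := hp.2
      constructor
      · intro l
        by_cases hl : l = i
        · subst hl; omega
        · have := hvl l hl; omega
      · intro a b hab
        by_cases ha : a = i
        · subst ha
          have := hvl b (Ne.symm hab)
          omega
        · by_cases hb : b = i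
          · subst hb
            have := hvl a ha
            omega
          · have h1 := hvl a ha
            have h2 := hvl b hb
            omega
  · rintro ⟨h1, h2⟩
    by_cases hfar : ∀ l, cc j ≤ v l
    · apply Finset.mem_union_left
      rw [far, Fintype.mem_piFinset]
      exact fun l => Finset.mem_Icc.mpr ⟨hfar l, h1 l⟩
    · push_neg at hfar
      obtain ⟨i, hi⟩ := hfar
      apply Finset.mem_union_right
      apply Finset.mem_biUnion.mpr
      refine ⟨(i, v i), by simp [Finset.mem_product, Finset.mem_range, hi], ?_⟩
      rw [near, Fintype.mem_piFinset]
      intro l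
      by_cases hl : l = i
      · subst hl; simp
      · rw [if_neg hl]
        have := h2 i l (fun h => hl h.symm)
        exact Finset.mem_Icc.mpr ⟨by omega, by omega⟩

/-- The extremal graph. -/
def GE (j k : ℕ) : SimpleGraph ↑(TT j k) where
  Adj u v := u ≠ v ∧ ∀ i, u.1 i ≤ v.1 i + 1 ∧ v.1 i ≤ u.1 i + 1
  symm := by
    refine ⟨?_⟩
    rintro u v ⟨h1, h2⟩
    exact ⟨h1.symm, fun i => ⟨(h2 i).2, (h2 i).1⟩⟩
  loopless := ⟨fun u h => h.1 rfl⟩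

/-- ℓ∞ distance. -/
def ell {k : ℕ} (u v : Fin k → ℕ) : ℕ :=
  Finset.univ.sup fun i => max (u i - v i) (v i - u i)

lemma ell_coord {k : ℕ} (u v : Fin k → ℕ) (i : Fin k) :
    max (u i - v i) (v i - u i) ≤ ell u v :=
  Finset.le_sup (f := fun i => max (u i - v i) (v i - u i)) (Finset.mem_univ i)

lemma ell_eq_zero {k : ℕ} {u v : Fin k → ℕ} (h : ell u v = 0) : u = v := by
  funext i
  have := ell_coord u v i
  omega

/-- one step towards the target. -/
def stp {k : ℕ} (u v : Fin k → ℕ) : Fin k → ℕ := fun i =>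
  if u i < v i then u i + 1 else if v i < u i then u i - 1 else u i

lemma cond_stp {j k : ℕ} {u v : Fin k → ℕ} (hu : cond j k u) (hv : cond j k v) :
    cond j k (stp u v) := by
  constructor
  · intro l
    have h1 := hu.1 l
    have h2 := hv.1 l
    unfold stp
    split_ifs <;> omega
  · intro a b hab
    have h1 := hu.2 a b hab
    have h2 := hv.2 a b hab
    have h3 := hu.2 b a (Ne.symm hab)
    have h4 := hv.2 b a (Ne.symm hab)
    unfold stp
    split_ifs <;> omega

lemma stp_adj {j k : ℕ} {u v : ↑(TT j k)} (hne : u ≠ v)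
    (hmem : stp u.1 v.1 ∈ TT j k) : (GE j k).Adj u ⟨stp u.1 v.1, hmem⟩ := by
  have hne' : u.1 ≠ v.1 := fun h => hne (Subtype.ext h)
  obtain ⟨i, hi⟩ := Function.ne_iff.mp hne'
  show u ≠ ⟨stp u.1 v.1, hmem⟩ ∧ ∀ l, u.1 l ≤ stp u.1 v.1 l + 1 ∧ stp u.1 v.1 l ≤ u.1 l + 1
  constructor
  · intro h
    have : u.1 i = stp u.1 v.1 i := congrFun (congrArg Subtype.val h) i
    unfold stp at this
    split_ifs at this <;> omega
  · intro l
    show u.1 l ≤ stp u.1 v.1 l + 1 ∧ stp u.1 v.1 l ≤ u.1 l + 1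
    unfold stp
    split_ifs <;> omega

lemma ell_stp {k : ℕ} {u v : Fin k → ℕ} (hne : u ≠ v) :
    ell (stp u v) v = ell u v - 1 ∧ 1 ≤ ell u v := by
  obtain ⟨i, hi⟩ := Function.ne_iff.mp hne
  have hpos : 1 ≤ ell u v := by
    have := ell_coord u v i
    omega
  refine ⟨le_antisymm ?_ ?_, hpos⟩
  · apply Finset.sup_le
    intro l _
    have := ell_coord u v l
    unfold stp
    split_ifs <;> omega
  · -- ell u v ≤ ell (stp u v) v + 1, so ell u v - 1 ≤ ell (stp u v) v
    have h : ell u v ≤ ell (stp u v) v + 1 := by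
      apply Finset.sup_le
      intro l _
      have := ell_coord (stp u v) v l
      revert this
      unfold stp
      split_ifs <;> omega
    omega

lemma exists_walk (j k : ℕ) : ∀ n : ℕ, ∀ u v : ↑(TT j k), ell u.1 v.1 = n →
    ∃ p : (GE j k).Walk u v, p.length = n := by
  intro n
  induction n using Nat.strong_induction_on with
  | _ n ih =>
    intro u v hn
    rcases Nat.eq_zero_or_pos n with h0 | hpos
    · subst h0
      have : u = v := Subtype.ext (ell_eq_zero hn)
      subst this
      exact ⟨SimpleGraph.Walk.nil, rfl⟩
    · have hne : u ≠ v := by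
        intro h
        subst h
        have : ell u.1 u.1 = 0 := by
          apply Nat.le_antisymm _ (Nat.zero_le _)
          apply Finset.sup_le
          intro l _
          omega
        omega
      have hmem : stp u.1 v.1 ∈ TT j k :=
        mem_TT.mpr (cond_stp (mem_TT.mp u.2) (mem_TT.mp v.2))
      have hne' : u.1 ≠ v.1 := fun h => hne (Subtype.ext h)
      obtain ⟨hdec, hone⟩ := ell_stp hne'
      set w : ↑(TT j k) := ⟨stp u.1 v.1, hmem⟩ with hw
      have hstep : (GE j k).Adj u w := stp_adj hne hmem
      obtain ⟨q, hq⟩ := ih (n - 1) (by omega) w v (by rw [hw]; rw [hdec, hn])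
      exact ⟨SimpleGraph.Walk.cons hstep q, by simp [hq]; omega⟩

lemma walk_lower (j k : ℕ) {u v : ↑(TT j k)} (p : (GE j k).Walk u v) :
    ell u.1 v.1 ≤ p.length := by
  apply Finset.sup_le
  intro i _
  induction p with
  | nil => omega
  | cons h q ihq =>
    have h2 := ((h : _ ≠ _ ∧ _).2 i)
    simp only [SimpleGraph.Walk.length_cons]
    omega

lemma edist_eq (j k : ℕ) (u v : ↑(TT j k)) :
    (GE j k).edist u v = (ell u.1 v.1 : ℕ∞) := by
  obtain ⟨p, hp⟩ := exists_walk j k (ell u.1 v.1) u v rfl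
  apply le_antisymm
  · calc (GE j k).edist u v ≤ (p.length : ℕ∞) := SimpleGraph.edist_le p
      _ = (ell u.1 v.1 : ℕ∞) := by rw [hp]
  · have hne_top : (GE j k).edist u v ≠ ⊤ := by
      apply ne_top_of_le_ne_top (ENat.coe_ne_top (ell u.1 v.1))
      calc (GE j k).edist u v ≤ (p.length : ℕ∞) := SimpleGraph.edist_le p
        _ = (ell u.1 v.1 : ℕ∞) := by rw [hp]
    obtain ⟨q, hq⟩ := SimpleGraph.exists_walk_of_edist_ne_top hne_top
    rw [← hq]
    exact_mod_cast walk_lower j k q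

def lm (j k : ℕ) (i : Fin k) : Fin k → ℕ := fun l => if l = i then 0 else dd0 j

lemma cond_lm (j k : ℕ) (i : Fin k) : cond j k (lm j k i) := by
  have h1 := dd0_le j
  have h2 := dd0_pos j
  constructor
  · intro l
    unfold lm
    split_ifs <;> omega
  · intro a b hab
    unfold lm
    split_ifs with ha hb hb <;> first
      | omega
      | (exfalso; exact hab (ha.trans hb.symm))

lemma lm_mem (j k : ℕ) (i : Fin k) : lm j k i ∈ TT j k := mem_TT.mpr (cond_lm j k i)

lemma ell_lm (j k : ℕ) (v : ↑(TT j k)) (i : Fin k) :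
    ell v.1 (lm j k i) = v.1 i := by
  have hv := mem_TT.mp v.2
  apply le_antisymm
  · apply Finset.sup_le
    intro l _
    by_cases hl : l = i
    · subst hl
      simp [lm]
    · have := hv.2 i l (fun h => hl h.symm)
      simp only [lm, if_neg hl]
      omega
  · have h := ell_coord v.1 (lm j k i) i
    have h0 : lm j k i i = 0 := by simp [lm]
    rw [h0] at h
    omega

lemma distK_lm (j k : ℕ) (v : ↑(TT j k)) (i : Fin k) :
    distK (GE j k) j v ⟨lm j k i, lm_mem j k i⟩ = (v.1 i : ℕ∞) := by
  unfold distK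
  rw [edist_eq]
  have h1 : ell v.1 (lm j k i) = v.1 i := ell_lm j k v i
  rw [h1]
  apply min_eq_left
  have hle : v.1 i ≤ j + 1 := (mem_TT.mp v.2).1 i
  calc ((v.1 i : ℕ) : ℕ∞) ≤ ((j + 1 : ℕ) : ℕ∞) := by exact_mod_cast hle
    _ = (j : ℕ∞) + 1 := by push_cast; ring

def RR (j k : ℕ) : Finset ↑(TT j k) :=
  Finset.univ.image fun i : Fin k => (⟨lm j k i, lm_mem j k i⟩ : ↑(TT j k))

lemma lm_inj (j k : ℕ) : Function.Injective (lm j k) := by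
  intro a b hab
  by_contra hne
  have h1 : lm j k a a = 0 := by simp [lm]
  have h2 : lm j k b a = dd0 j := by
    unfold lm
    rw [if_neg hne]
  rw [hab] at h1
  rw [h1] at h2
  have := dd0_pos j
  omega

lemma RR_card (j k : ℕ) : (RR j k).card = k := by
  unfold RR
  rw [Finset.card_image_of_injective _ (fun a b hab => lm_inj j k (congrArg Subtype.val hab))]
  simp

lemma RR_resolving (j k : ℕ) : IsDistKResolving (GE j k) j ↑(RR j k) := by
  intro x y hxy
  have hne : x.1 ≠ y.1 := fun h => hxy (Subtype.ext h)
  obtain ⟨i, hi⟩ := Function.ne_iff.mp hne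
  refine ⟨⟨lm j k i, lm_mem j k i⟩, ?_, ?_⟩
  · simp only [RR, Finset.coe_image, Set.mem_image]
    exact ⟨i, by simp, rfl⟩
  · rw [distK_lm, distK_lm]
    exact fun h => hi (by exact_mod_cast h)

lemma far_card (j k : ℕ) : (far j k).card = ((2 * (j + 1)) / 3 + 1) ^ k := by
  rw [far, Fintype.card_piFinset, Finset.prod_const, Nat.card_Icc]
  congr 1
  · unfold cc; omega
  · simp

lemma near_card (j k : ℕ) (i : Fin k) (t : ℕ) (ht : t < cc j) :
    (near j k i t).card = (2 * t + 1) ^ (k - 1) := by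
  have hD := dd0_lb j
  rw [near, Fintype.card_piFinset]
  rw [← Finset.mul_prod_erase Finset.univ _ (Finset.mem_univ i)]
  rw [if_pos rfl]
  rw [Finset.prod_congr rfl (fun x hx => by rw [if_neg (Finset.ne_of_mem_erase hx)])]
  rw [Finset.prod_const, Finset.card_singleton, one_mul, Nat.card_Icc,
    Finset.card_erase_of_mem (Finset.mem_univ i)]
  congr 1
  · omega
  · simp

lemma TT_card (j k : ℕ) :
    (TT j k).card = ((2 * (j + 1)) / 3 + 1) ^ k
      + k * ∑ i ∈ Finset.Icc 1 ((j + 3) / 3), (2 * i - 1) ^ (k - 1) := by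
  classical
  have hD := dd0_lb j
  rw [TT]
  rw [Finset.card_union_of_disjoint]
  · rw [far_card, Finset.card_biUnion]
    · congr 1
      rw [Finset.sum_congr rfl (fun p hp => by
        simp only [Finset.mem_product, Finset.mem_range] at hp
        exact near_card j k p.1 p.2 hp.2)]
      rw [Finset.sum_product]
      rw [Finset.sum_const_nat (m := ∑ t ∈ Finset.range (cc j), (2 * t + 1) ^ (k - 1))
        (fun s _ => rfl)]
      have : cc j = (j + 3) / 3 := rfl
      rw [sum_odd_reindex, this]
      simp
    · -- pairwise disjoint near sets
      rintro ⟨i, t⟩ hp ⟨i', t'⟩ hq hne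
      simp only [Finset.mem_coe, Finset.mem_product, Finset.mem_range] at hp hq
      rw [Function.onFun, Finset.disjoint_left]
      intro f hf hg
      rw [near, Fintype.mem_piFinset] at hf hg
      by_cases hii : i = i'
      · subst hii
        have htne : t ≠ t' := fun h => hne (by rw [h])
        have h1 := hf i
        have h2 := hg i
        rw [if_pos rfl] at h1 h2
        exact htne ((Finset.mem_singleton.mp h1).symm.trans (Finset.mem_singleton.mp h2))
      · have h1 := hf i
        rw [if_pos rfl] at h1
        have h2 := hg i
        rw [if_neg hii] at h2
        have h1' := Finset.mem_singleton.mp h1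
        have h2' := Finset.mem_Icc.mp h2
        have ht := hp.2
        have ht' := hq.2
        omega
  · -- far disjoint from near union
    rw [Finset.disjoint_left]
    intro f hf hg
    rw [far, Fintype.mem_piFinset] at hf
    obtain ⟨p, hp, hmem⟩ := Finset.mem_biUnion.mp hg
    obtain ⟨i, t⟩ := p
    simp only [Finset.mem_product, Finset.mem_range] at hp
    rw [near, Fintype.mem_piFinset] at hmem
    have h1 := hmem i
    rw [if_pos rfl] at h1
    have h1' := Finset.mem_singleton.mp h1
    have h2 := Finset.mem_Icc.mp (hf i)
    have := hp.2
    omega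

lemma card_TT_vertex (j k : ℕ) : Fintype.card ↑(TT j k) = (TT j k).card :=
  Fintype.card_coe _

end Extremal

def bound (j a : ℕ) : ℕ :=
  ((2 * (j + 1)) / 3 + 1) ^ a + a * ∑ i ∈ Finset.Icc 1 ((j + 3) / 3), (2 * i - 1) ^ (a - 1)

lemma bound_mono (j : ℕ) {a b : ℕ} (hab : a ≤ b) : bound j a ≤ bound j b := by
  unfold bound
  apply Nat.add_le_add
  · exact Nat.pow_le_pow_right (by omega) hab
  · apply Nat.mul_le_mul hab
    apply Finset.sum_le_sum
    intro i hi
    have : 1 ≤ i := (Finset.mem_Icc.mp hi).1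
    exact Nat.pow_le_pow_right (by omega) (by omega)

lemma bound_strict (j : ℕ) (hj : 1 ≤ j) {a b : ℕ} (hab : a < b) : bound j a < bound j b := by
  have h1 : bound j a ≤ bound j (b - 1) := bound_mono j (by omega)
  have h2 : bound j (b - 1) < bound j b := by
    unfold bound
    apply Nat.add_lt_add_of_lt_of_le
    · apply Nat.pow_lt_pow_right
      · omega
      · omega
    · apply Nat.mul_le_mul (by omega)
      apply Finset.sum_le_sum
      intro i hi
      have : 1 ≤ i := (Finset.mem_Icc.mp hi).1
      exact Nat.pow_le_pow_right (by omega) (by omega)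
  omega

lemma dimK_GE (j k : ℕ) (hj : 1 ≤ j) : dimK (Extremal.GE j k) j = k := by
  have hle : dimK (Extremal.GE j k) j ≤ k := by
    apply Nat.sInf_le
    exact ⟨Extremal.RR j k, Extremal.RR_resolving j k, Extremal.RR_card j k⟩
  have hge : k ≤ dimK (Extremal.GE j k) j := by
    by_contra hlt
    push_neg at hlt
    obtain ⟨S, hSres, hScard⟩ := exists_resolving_of_dimK (Extremal.GE j k) j
    have hbound := card_le_bound (Extremal.GE j k) j S hSres
    rw [hScard] at hbound
    have hcard : Fintype.card ↑(Extremal.TT j k) = bound j k := by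
      rw [Extremal.card_TT_vertex, Extremal.TT_card]
      rfl
    rw [hcard] at hbound
    have : bound j (dimK (Extremal.GE j k) j) < bound j k := bound_strict j hj hlt
    have hb : bound j k ≤ bound j (dimK (Extremal.GE j k) j) := hbound
    omega
  omega

section Transport

lemma edist_hom_le {α β : Type*} {G : SimpleGraph α} {G' : SimpleGraph β} (f : G →g G')
    (a b : α) : G'.edist (f a) (f b) ≤ G.edist a b := by
  rw [SimpleGraph.edist_eq_sInf (G := G)]
  apply le_sInf
  rintro x ⟨p, rfl⟩
  calc G'.edist (f a) (f b) ≤ ((p.map f).length : ℕ∞) := SimpleGraph.edist_le _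
    _ = (p.length : ℕ∞) := by rw [SimpleGraph.Walk.length_map]

lemma edist_le_of_map {α β : Type*} {G : SimpleGraph α} {G' : SimpleGraph β} (f : α → β)
    (hf : ∀ x y, G.Adj x y → G'.Adj (f x) (f y)) (a b : α) :
    G'.edist (f a) (f b) ≤ G.edist a b :=
  edist_hom_le ⟨f, fun h => hf _ _ h⟩ a b

lemma edist_comap {α β : Type*} (e : α ≃ β) (G : SimpleGraph β) (a b : α) :
    (G.comap e).edist a b = G.edist (e a) (e b) := by
  apply le_antisymm
  · have h := edist_le_of_map (G := G) (G' := G.comap ⇑e) ⇑e.symm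
      (fun x y hxy => by
        show G.Adj (e (e.symm x)) (e (e.symm y))
        simpa using hxy) (e a) (e b)
    simpa using h
  · exact edist_le_of_map (G := G.comap ⇑e) (G' := G) ⇑e (fun x y hxy => hxy) a b

lemma distK_comap {α β : Type*} (e : α ≃ β) (G : SimpleGraph β) (j : ℕ) (a b : α) :
    distK (G.comap e) j a b = distK G j (e a) (e b) := by
  unfold distK
  rw [edist_comap]

lemma dimK_comap {α β : Type*} [Fintype α] [Fintype β] (e : α ≃ β) (G : SimpleGraph β)
    (j : ℕ) : dimK (G.comap e) j = dimK G j := by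
  classical
  unfold dimK
  congr 1
  ext m
  simp only [Set.mem_setOf_eq]
  constructor
  · rintro ⟨S, hS, rfl⟩
    refine ⟨S.image e, ?_, Finset.card_image_of_injective _ e.injective⟩
    intro x y hxy
    obtain ⟨z, hz, hd⟩ := hS (e.symm x) (e.symm y) (fun h => hxy (by
      have := congrArg e h; simpa using this))
    refine ⟨e z, ?_, ?_⟩
    · simp only [Finset.coe_image]
      exact Set.mem_image_of_mem _ hz
    · rw [distK_comap, distK_comap] at hd
      simpa using hd
  · rintro ⟨S, hS, rfl⟩
    refine ⟨S.image e.symm, ?_, Finset.card_image_of_injective _ e.symm.injective⟩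
    intro x y hxy
    obtain ⟨z, hz, hd⟩ := hS (e x) (e y) (fun h => hxy (e.injective h))
    refine ⟨e.symm z, ?_, ?_⟩
    · simp only [Finset.coe_image]
      exact Set.mem_image_of_mem _ hz
    · rw [distK_comap, distK_comap]
      simpa using hd

end Transport

theorem stmt1 (j k : ℕ) (hj : 1 ≤ j) (hk : 1 ≤ k) :
    (∀ (V : Type) [Fintype V] (G : SimpleGraph V),
      dimK G j = k →
      Fintype.card V ≤
        ((2 * (j + 1)) / 3 + 1) ^ k
          + k * ∑ i ∈ Finset.Icc 1 ((j + 3) / 3), (2 * i - 1) ^ (k - 1)) ∧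
    (∃ (m : ℕ) (G : SimpleGraph (Fin m)),
      dimK G j = k ∧
      m = ((2 * (j + 1)) / 3 + 1) ^ k
          + k * ∑ i ∈ Finset.Icc 1 ((j + 3) / 3), (2 * i - 1) ^ (k - 1)) := by
  constructor
  · intro V _ G hdim
    obtain ⟨S, hSres, hScard⟩ := exists_resolving_of_dimK G j
    rw [hdim] at hScard
    have h := card_le_bound G j S hSres
    rw [hScard] at h
    exact h
  · have hcard : Fintype.card ↑(Extremal.TT j k) = bound j k := by
      rw [Extremal.card_TT_vertex, Extremal.TT_card]
      rfl
    have e : Fin (bound j k) ≃ ↑(Extremal.TT j k) := (Fintype.equivFinOfCardEq hcard).symm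
    refine ⟨bound j k, (Extremal.GE j k).comap e, ?_, rfl⟩
    rw [dimK_comap e]
    exact dimK_GE j k hj
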